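/- For x > 0, the convolution ∫₀^x e^{−(x−u)} E₁(u) du equals e^{−x}(e^x E₁(x) + γ + log x), where E₁ is the exponential integral and γ is the Euler–Mascheroni constant; equivalently ∫₀^x e^u E₁(u) du = e^x E₁(x) + γ + log x. -/

import Mathlib

open Real MeasureTheory Set Filter Topology

/-- The exponential integral `E₁(x) = ∫₁^∞ e^{−xt}/t dt`. -/
noncomputable def expIntegralE1 (x : ℝ) : ℝ := ∫ t in Set.Ioi (1 : ℝ), Real.exp (-(x * t)) / t


-- integrability of exp(-t)/t on Ioi x, x>0
lemma int_f1 {x : ℝ} (hx : 0 < x) : IntegrableOn (fun t => Real.exp (-t) / t) (Ioi x) := by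
  have hcont : ContinuousOn (fun t => Real.exp (-t) / t) (Ioi x) := by
    apply ContinuousOn.div (by fun_prop) continuousOn_id
    exact fun t ht => ne_of_gt (hx.trans ht)
  refine Integrable.mono' ((exp_neg_integrableOn_Ioi x one_pos).const_mul x⁻¹)
    (hcont.aestronglyMeasurable measurableSet_Ioi) ?_
  filter_upwards [ae_restrict_mem measurableSet_Ioi] with t ht
  have h0 : 0 < t := hx.trans ht
  rw [Real.norm_eq_abs, abs_of_nonneg (by positivity)]
  rw [div_eq_inv_mul]
  have he : Real.exp (-(1:ℝ) * t) = Real.exp (-t) := by norm_num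
  rw [he]
  gcongr
  exact ht.le

-- integrability of |log| on Ioc 0 x
lemma int_abs_log {x : ℝ} (hx : 0 < x) : IntegrableOn (fun t => |Real.log t|) (Ioc 0 x) := by
  have hrpow : IntegrableOn (fun t : ℝ => t ^ (-2⁻¹ : ℝ)) (Ioc 0 x) := by
    have := (intervalIntegral.intervalIntegrable_rpow' (a := 0) (b := x)
      (r := (-2⁻¹ : ℝ)) (by norm_num))
    rwa [intervalIntegrable_iff_integrableOn_Ioc_of_le hx.le] at this
  refine Integrable.mono' ((hrpow.const_mul 2).add
      ((integrableOn_const_iff (C := |Real.log x|)).mpr (Or.inr measure_Ioc_lt_top)))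
    ((Real.measurable_log.abs).aestronglyMeasurable) ?_
  filter_upwards [ae_restrict_mem measurableSet_Ioc] with t ht
  simp only [Pi.add_apply]
  rw [Real.norm_eq_abs, abs_abs]
  rcases le_or_gt t 1 with h1 | h1
  · have : -Real.log t ≤ 2 * t ^ (-2⁻¹ : ℝ) := by
      have h2 : Real.log (t ^ (-2⁻¹ : ℝ)) ≤ t ^ (-2⁻¹ : ℝ) - 1 :=
        Real.log_le_sub_one_of_pos (Real.rpow_pos_of_pos ht.1 _)
      rw [Real.log_rpow ht.1] at h2
      nlinarith [Real.rpow_pos_of_pos ht.1 (-2⁻¹ : ℝ)]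
    rw [abs_of_nonpos (Real.log_nonpos ht.1.le h1)]
    have : (0:ℝ) ≤ |Real.log x| := abs_nonneg _
    linarith
  · rw [abs_of_nonneg (Real.log_nonneg h1.le)]
    have h3 : Real.log t ≤ Real.log x := Real.log_le_log (by linarith) ht.2
    have h4 : Real.log x ≤ |Real.log x| := le_abs_self _
    have h5 : 0 ≤ 2 * t ^ (-2⁻¹ : ℝ) := by positivity
    linarith

-- integrability of exp(-t) * log t on Ioi 0
lemma int_f2 : IntegrableOn (fun t => Real.exp (-t) * Real.log t) (Ioi 0 : Set ℝ) := by
  have h1 : IntegrableOn (fun t => Real.exp (-t) * Real.log t) (Ioc 0 1 : Set ℝ) := by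
    refine Integrable.mono' (int_abs_log one_pos)
      ((measurable_exp.comp measurable_neg).mul Real.measurable_log).aestronglyMeasurable ?_
    filter_upwards [ae_restrict_mem measurableSet_Ioc] with t ht
    rw [Real.norm_eq_abs, abs_mul, abs_of_nonneg (Real.exp_pos _).le]
    calc Real.exp (-t) * |Real.log t| ≤ 1 * |Real.log t| := by
          gcongr; exact Real.exp_le_one_iff.mpr (by linarith [ht.1])
      _ = |Real.log t| := one_mul _
  have h2 : IntegrableOn (fun t => Real.exp (-t) * Real.log t) (Ioi 1 : Set ℝ) := by
    have hG := Real.GammaIntegral_convergent (s := 2) (by norm_num)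
    refine Integrable.mono' (hG.mono_set (Ioi_subset_Ioi one_pos.le)) ?_ ?_
    · have : ContinuousOn (fun t => Real.exp (-t) * Real.log t) (Ioi 1 : Set ℝ) := by
        apply ContinuousOn.mul (by fun_prop)
        exact Real.continuousOn_log.mono (fun t ht => ne_of_gt (lt_trans one_pos ht))
      exact this.aestronglyMeasurable measurableSet_Ioi
    · filter_upwards [ae_restrict_mem measurableSet_Ioi] with t ht
      have h0 : (0:ℝ) < t := lt_trans one_pos ht
      rw [Real.norm_eq_abs, abs_mul, abs_of_nonneg (Real.exp_pos _).le,
        abs_of_nonneg (Real.log_nonneg ht.le)]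
      have : Real.log t ≤ t := (Real.log_le_sub_one_of_pos h0).trans (by linarith)
      calc Real.exp (-t) * Real.log t ≤ Real.exp (-t) * t := by gcongr
        _ = Real.exp (-t) * t ^ ((2:ℝ) - 1) := by norm_num [Real.rpow_one]
  have : (Ioi (0:ℝ)) = Ioc 0 1 ∪ Ioi 1 := (Ioc_union_Ioi_eq_Ioi (by norm_num)).symm
  rw [this]
  exact h1.union h2



-- representation E₁(x) = ∫_{Ioi x} e^{-t}/t dt
lemma E1_repr {x : ℝ} (hx : 0 < x) :
    expIntegralE1 x = ∫ t in Ioi x, Real.exp (-t) / t := by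
  have h := MeasureTheory.integral_comp_mul_left_Ioi (fun s => Real.exp (-s) / s) 1 hx
  rw [mul_one] at h
  have h2 : ∀ t ∈ Ioi (1:ℝ), Real.exp (-(x * t)) / t
      = x * (Real.exp (-(x * t)) / (x * t)) := by
    intro t ht
    have h0 : (0:ℝ) < t := lt_trans one_pos ht
    field_simp
  rw [expIntegralE1, setIntegral_congr_fun measurableSet_Ioi h2,
    MeasureTheory.integral_const_mul, h, smul_eq_mul]
  rw [← mul_assoc, mul_inv_cancel₀ hx.ne', one_mul]

-- splitting: ∫_{Ioi c} = ∫_c^y + ∫_{Ioi y}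
lemma integral_Ioi_split {f : ℝ → ℝ} {c y : ℝ} (hint : IntegrableOn f (Ioi c))
    (hy : c ≤ y) :
    ∫ t in Ioi c, f t = (∫ t in c..y, f t) + ∫ t in Ioi y, f t := by
  rw [intervalIntegral.integral_of_le hy,
    ← setIntegral_union (Ioc_disjoint_Ioi le_rfl) measurableSet_Ioi
      (hint.mono_set Ioc_subset_Ioi_self) (hint.mono_set (Ioi_subset_Ioi hy)),
    Ioc_union_Ioi_eq_Ioi hy]

-- derivative of tail integral
lemma hasDerivAt_integral_Ioi {f : ℝ → ℝ} {x c : ℝ} (hcx : c < x)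
    (hint : IntegrableOn f (Ioi c)) (hcont : ContinuousOn f (Ioi c)) :
    HasDerivAt (fun y => ∫ t in Ioi y, f t) (-f x) x := by
  have hx : x ∈ Ioi c := hcx
  have hmeas : StronglyMeasurableAtFilter f (𝓝 x) volume :=
    hcont.stronglyMeasurableAtFilter isOpen_Ioi _ hx
  have hii : IntervalIntegrable f volume c x := by
    rw [intervalIntegrable_iff_integrableOn_Ioc_of_le hcx.le]
    exact hint.mono_set Ioc_subset_Ioi_self
  have hd : HasDerivAt (fun y => ∫ t in c..y, f t) (f x) x :=
    intervalIntegral.integral_hasDerivAt_right hii hmeas (hcont.continuousAt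
      (Ioi_mem_nhds hcx))
  have hd2 : HasDerivAt (fun y => (∫ t in Ioi c, f t) - ∫ t in c..y, f t) (-f x) x := by
    exact hd.const_sub _
  refine hd2.congr_of_eventuallyEq ?_
  filter_upwards [Ioi_mem_nhds hcx] with y hy
  rw [integral_Ioi_split hint (le_of_lt hy)]
  ring


lemma gamma_integral_log : (∫ t in Ioi (0:ℝ), Real.exp (-t) * Real.log t)
    = -Real.eulerMascheroniConstant := by
  have h1 : HasDerivAt Complex.Gamma (-Real.eulerMascheroniConstant : ℂ) 1 := by
    exact_mod_cast Complex.hasDerivAt_Gamma_one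
  have h2 := Complex.hasDerivAt_GammaIntegral (s := 1) (by norm_num)
  have heq : Complex.Gamma =ᶠ[𝓝 (1:ℂ)] Complex.GammaIntegral := by
    have hopen : IsOpen {s : ℂ | 0 < s.re} := isOpen_lt continuous_const Complex.continuous_re
    filter_upwards [hopen.mem_nhds (by norm_num : (0:ℝ) < (1:ℂ).re)] with s hs
    exact Complex.Gamma_eq_integral hs
  have h3 : HasDerivAt Complex.GammaIntegral (-Real.eulerMascheroniConstant : ℂ) 1 :=
    h1.congr_of_eventuallyEq heq.symm
  have h4 : (-Real.eulerMascheroniConstant : ℂ)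
      = ∫ t : ℝ in Ioi 0, (t:ℂ) ^ ((1:ℂ) - 1) * (Real.log t * Real.exp (-t)) :=
    h3.unique h2
  have h5 : (∫ t : ℝ in Ioi 0, (t:ℂ) ^ ((1:ℂ) - 1) * (Real.log t * Real.exp (-t)))
      = ∫ t : ℝ in Ioi 0, ((Real.exp (-t) * Real.log t : ℝ) : ℂ) := by
    refine setIntegral_congr_fun measurableSet_Ioi (fun t ht => ?_)
    rw [sub_self, Complex.cpow_zero, one_mul]
    push_cast
    ring
  have h6 : (∫ t in Ioi (0:ℝ), ((Real.exp (-t) * Real.log t : ℝ) : ℂ))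
      = ((∫ t in Ioi (0:ℝ), Real.exp (-t) * Real.log t : ℝ) : ℂ) :=
    integral_ofReal (𝕜 := ℂ)
  rw [h5, h6] at h4
  exact_mod_cast h4.symm







noncomputable def E1r (x : ℝ) : ℝ := ∫ t in Ioi x, Real.exp (-t) / t
noncomputable def Kf (x : ℝ) : ℝ := ∫ t in Ioi x, Real.exp (-t) * Real.log t

lemma cont_f1 : ContinuousOn (fun t => Real.exp (-t) / t) (Ioi (0:ℝ)) :=
  ContinuousOn.div (by fun_prop) continuousOn_id (fun t ht => ne_of_gt ht)

lemma cont_f2 : ContinuousOn (fun t => Real.exp (-t) * Real.log t) (Ioi (0:ℝ)) :=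
  ContinuousOn.mul (by fun_prop) (Real.continuousOn_log.mono (fun t ht => ne_of_gt ht))

lemma hasDerivAt_E1r {x : ℝ} (hx : 0 < x) :
    HasDerivAt E1r (-(Real.exp (-x) / x)) x :=
  hasDerivAt_integral_Ioi (by linarith : x/2 < x)
    (int_f1 (by linarith)) (cont_f1.mono (Ioi_subset_Ioi (by linarith)))

lemma hasDerivAt_Kf {x : ℝ} (hx : 0 < x) :
    HasDerivAt Kf (-(Real.exp (-x) * Real.log x)) x :=
  hasDerivAt_integral_Ioi (by linarith : x/2 < x)
    (int_f2.mono_set (Ioi_subset_Ioi (by linarith))) (cont_f2.mono (Ioi_subset_Ioi (by linarith)))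

noncomputable def Df (x : ℝ) : ℝ := Kf x - Real.exp (-x) * Real.log x - E1r x

lemma hasDerivAt_Df {x : ℝ} (hx : 0 < x) : HasDerivAt Df 0 x := by
  have h1 : HasDerivAt (fun y : ℝ => Real.exp (-y)) (-Real.exp (-x)) x := by
    simpa using (hasDerivAt_neg x).exp
  have h2 : HasDerivAt (fun y => Real.exp (-y) * Real.log y)
      (-Real.exp (-x) * Real.log x + Real.exp (-x) * x⁻¹) x :=
    h1.mul (Real.hasDerivAt_log hx.ne')
  have h3 := ((hasDerivAt_Kf hx).sub h2).sub (hasDerivAt_E1r hx)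
  have : -(Real.exp (-x) * Real.log x) - (-Real.exp (-x) * Real.log x
      + Real.exp (-x) * x⁻¹) - -(Real.exp (-x) / x) = 0 := by
    field_simp
    ring
  rw [this] at h3
  exact h3

lemma Df_const {x y : ℝ} (hx : 0 < x) (hy : 0 < y) : Df x = Df y := by
  have h := intervalIntegral.integral_eq_sub_of_hasDerivAt
    (f := Df) (f' := fun _ => (0:ℝ)) (a := x) (b := y)
    (fun z hz => hasDerivAt_Df (lt_of_lt_of_le (lt_min hx hy) (by
      rcases Set.mem_uIcc.mp hz with ⟨h1,_⟩|⟨h1,_⟩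
      · exact le_trans (min_le_left _ _) h1
      · exact le_trans (min_le_right _ _) h1)))
    intervalIntegrable_const
  simp only [intervalIntegral.integral_zero] at h
  linarith

lemma E1r_nonneg {x : ℝ} (hx : 0 < x) : 0 ≤ E1r x :=
  setIntegral_nonneg measurableSet_Ioi (fun t ht => by
    have h0 : 0 < t := lt_trans hx ht
    positivity)

lemma E1r_le_exp {x : ℝ} (hx : 1 ≤ x) : E1r x ≤ Real.exp (-x) := by
  have h := setIntegral_mono_on (int_f1 (by linarith)) (by
      simpa using exp_neg_integrableOn_Ioi x one_pos) measurableSet_Ioi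
    (fun t ht => by
      have h1 : (1:ℝ) ≤ t := le_trans hx (le_of_lt ht)
      exact div_le_self (Real.exp_pos _).le h1)
  rw [integral_exp_neg_Ioi] at h
  exact h

lemma tendsto_E1r_atTop : Tendsto E1r atTop (𝓝 0) := by
  refine squeeze_zero_norm' ?_ tendsto_exp_neg_atTop_nhds_zero
  filter_upwards [eventually_ge_atTop (1:ℝ)] with x hx
  rw [Real.norm_eq_abs, abs_of_nonneg (E1r_nonneg (by linarith))]
  exact E1r_le_exp hx

lemma tendsto_exp_log_atTop : Tendsto (fun x => Real.exp (-x) * Real.log x) atTop (𝓝 0) := by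
  refine squeeze_zero_norm' ?_ (by simpa using tendsto_pow_mul_exp_neg_atTop_nhds_zero 1)
  filter_upwards [eventually_ge_atTop (1:ℝ)] with x hx
  rw [Real.norm_eq_abs, abs_mul, abs_of_nonneg (Real.exp_pos _).le,
    abs_of_nonneg (Real.log_nonneg hx)]
  have : Real.log x ≤ x := (Real.log_le_sub_one_of_pos (by linarith)).trans (by linarith)
  nlinarith [Real.exp_pos (-x), Real.log_nonneg hx]

lemma tendsto_Kf_atTop : Tendsto Kf atTop (𝓝 0) := by
  have hint : IntegrableOn (fun t => Real.exp (-t) * Real.log t) (Ioi 1) :=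
    int_f2.mono_set (Ioi_subset_Ioi one_pos.le)
  have h1 : Tendsto (fun y => ∫ t in (1:ℝ)..y, Real.exp (-t) * Real.log t) atTop
      (𝓝 (Kf 1)) := MeasureTheory.intervalIntegral_tendsto_integral_Ioi 1 hint tendsto_id
  have h2 : Tendsto (fun y => Kf 1 - ∫ t in (1:ℝ)..y, Real.exp (-t) * Real.log t) atTop
      (𝓝 (Kf 1 - Kf 1)) := tendsto_const_nhds.sub h1
  rw [sub_self] at h2
  refine h2.congr' ?_
  filter_upwards [eventually_ge_atTop (1:ℝ)] with y hy
  have := integral_Ioi_split hint hy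
  unfold Kf
  linarith

lemma Df_eq_zero {x : ℝ} (hx : 0 < x) : Df x = 0 := by
  have h1 : Tendsto Df atTop (𝓝 (Df x)) := by
    refine tendsto_const_nhds.congr' ?_
    filter_upwards [eventually_gt_atTop (0:ℝ)] with y hy
    exact Df_const hx hy
  have h2 : Tendsto Df atTop (𝓝 0) := by
    have := (tendsto_Kf_atTop.sub tendsto_exp_log_atTop).sub tendsto_E1r_atTop
    rw [sub_zero, sub_zero] at this
    exact this
  exact tendsto_nhds_unique h1 h2

lemma tendsto_Kf_zero : Tendsto Kf (𝓝[>] (0:ℝ)) (𝓝 (-Real.eulerMascheroniConstant)) := by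
  have hP : ContinuousOn (fun x => ∫ t in Ioc 0 x, Real.exp (-t) * Real.log t) (Icc (0:ℝ) 1) := by
    apply intervalIntegral.continuousOn_primitive
    rw [integrableOn_Icc_iff_integrableOn_Ioc]
    exact int_f2.mono_set Ioc_subset_Ioi_self
  have h0 : Tendsto (fun x => ∫ t in Ioc 0 x, Real.exp (-t) * Real.log t) (𝓝[>] (0:ℝ))
      (𝓝 0) := by
    have := (hP 0 (by simp)).tendsto
    rw [Ioc_self, Measure.restrict_empty, integral_zero_measure] at this
    refine this.mono_left ?_
    rw [← nhdsWithin_Ioc_eq_nhdsGT one_pos]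
    exact nhdsWithin_mono _ Ioc_subset_Icc_self
  have h2 : Tendsto (fun x => (∫ t in Ioi (0:ℝ), Real.exp (-t) * Real.log t)
      - ∫ t in Ioc 0 x, Real.exp (-t) * Real.log t) (𝓝[>] (0:ℝ))
      (𝓝 (-Real.eulerMascheroniConstant)) := by
    rw [gamma_integral_log]
    simpa using (tendsto_const_nhds (x := -Real.eulerMascheroniConstant)).sub h0
  refine h2.congr' ?_
  filter_upwards [self_mem_nhdsWithin] with y (hy : 0 < y)
  have := integral_Ioi_split (c := 0) int_f2 hy.le
  rw [intervalIntegral.integral_of_le hy.le] at this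
  unfold Kf
  linarith

lemma tendsto_slope_exp_neg : Tendsto (fun x : ℝ => (Real.exp (-x) - 1) / x) (𝓝[>] (0:ℝ))
    (𝓝 (-1)) := by
  have h : HasDerivAt (fun y : ℝ => Real.exp (-y)) (-1) 0 := by
    simpa using (hasDerivAt_neg (0:ℝ)).exp
  have := (hasDerivAt_iff_tendsto_slope.mp h).mono_left
    (nhdsWithin_mono _ (fun y hy => ne_of_gt hy))
  refine this.congr' ?_
  filter_upwards [self_mem_nhdsWithin] with y (hy : 0 < y)
  simp [slope_def_field, div_eq_iff hy.ne']

lemma tendsto_slope_one_sub_exp : Tendsto (fun x : ℝ => (1 - Real.exp x) / x) (𝓝[>] (0:ℝ))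
    (𝓝 (-1)) := by
  have h : HasDerivAt (fun y : ℝ => 1 - Real.exp y) (-1) 0 := by
    simpa using (Real.hasDerivAt_exp 0).const_sub (1:ℝ)
  have := (hasDerivAt_iff_tendsto_slope.mp h).mono_left
    (nhdsWithin_mono _ (fun y hy => ne_of_gt hy))
  refine this.congr' ?_
  filter_upwards [self_mem_nhdsWithin] with y (hy : 0 < y)
  simp [slope_def_field, div_eq_iff hy.ne']

lemma tendsto_mul_log_zero : Tendsto (fun x : ℝ => x * Real.log x) (𝓝[>] (0:ℝ)) (𝓝 0) := by
  have := (Real.continuous_mul_log.tendsto 0).mono_left (nhdsWithin_le_nhds (s := Ioi (0:ℝ)))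
  simpa using this

lemma tendsto_exp_sub_one_mul_log : Tendsto (fun x : ℝ => (Real.exp (-x) - 1) * Real.log x)
    (𝓝[>] (0:ℝ)) (𝓝 0) := by
  have h := tendsto_slope_exp_neg.mul tendsto_mul_log_zero
  rw [mul_zero] at h
  refine h.congr' ?_
  filter_upwards [self_mem_nhdsWithin] with y (hy : 0 < y)
  field_simp

lemma tendsto_one_sub_exp_mul_log : Tendsto (fun x : ℝ => (1 - Real.exp x) * Real.log x)
    (𝓝[>] (0:ℝ)) (𝓝 0) := by
  have h := tendsto_slope_one_sub_exp.mul tendsto_mul_log_zero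
  rw [mul_zero] at h
  refine h.congr' ?_
  filter_upwards [self_mem_nhdsWithin] with y (hy : 0 < y)
  field_simp

lemma tendsto_E1r_add_log : Tendsto (fun x => E1r x + Real.log x) (𝓝[>] (0:ℝ))
    (𝓝 (-Real.eulerMascheroniConstant)) := by
  have h := tendsto_Kf_zero.sub tendsto_exp_sub_one_mul_log
  rw [sub_zero] at h
  refine h.congr' ?_
  filter_upwards [self_mem_nhdsWithin] with y (hy : 0 < y)
  have hD := Df_eq_zero hy
  unfold Df at hD
  ring_nf
  ring_nf at hD
  linarith

lemma tendsto_exp_mul_E1r_add_log : Tendsto (fun x => Real.exp x * E1r x + Real.log x)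
    (𝓝[>] (0:ℝ)) (𝓝 (-Real.eulerMascheroniConstant)) := by
  have hexp : Tendsto (fun x : ℝ => Real.exp x) (𝓝[>] (0:ℝ)) (𝓝 1) := by
    have := (Real.continuous_exp.tendsto 0).mono_left (nhdsWithin_le_nhds (s := Ioi (0:ℝ)))
    simpa using this
  have h := (hexp.mul tendsto_E1r_add_log).add tendsto_one_sub_exp_mul_log
  rw [one_mul, add_zero] at h
  refine h.congr' ?_
  filter_upwards [self_mem_nhdsWithin] with y (hy : 0 < y)
  ring











lemma expIntegralE1_eventually_eq {u : ℝ} (hu : 0 < u) : expIntegralE1 =ᶠ[𝓝 u] E1r := by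
  filter_upwards [Ioi_mem_nhds hu] with y hy
  exact E1_repr hy

lemma hasDerivAt_expIntegralE1 {u : ℝ} (hu : 0 < u) :
    HasDerivAt expIntegralE1 (-(Real.exp (-u) / u)) u :=
  (hasDerivAt_E1r hu).congr_of_eventuallyEq (expIntegralE1_eventually_eq hu)

lemma E1r_le_bound {x u : ℝ} (hx : 0 < x) (hu : u ∈ Ioc (0:ℝ) x) :
    E1r u ≤ 1 + Real.log (max 1 x) + |Real.log u| := by
  set M := max 1 x with hM
  have hM1 : (1:ℝ) ≤ M := le_max_left _ _
  have huM : u ≤ M := le_trans hu.2 (le_max_right _ _)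
  have hu0 : 0 < u := hu.1
  have hsplit := integral_Ioi_split (c := u) (int_f1 hu0) huM
  have h1 : (∫ t in u..M, Real.exp (-t) / t) ≤ ∫ t in u..M, t⁻¹ := by
    apply intervalIntegral.integral_mono_on huM
    · rw [intervalIntegrable_iff_integrableOn_Ioc_of_le huM]
      exact (int_f1 hu0).mono_set Ioc_subset_Ioi_self
    · apply ContinuousOn.intervalIntegrable
      apply ContinuousOn.inv₀ continuousOn_id
      intro t ht
      rw [uIcc_of_le huM] at ht
      exact ne_of_gt (lt_of_lt_of_le hu0 ht.1)
    · intro t ht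
      have ht0 : 0 < t := lt_of_lt_of_le hu0 ht.1
      rw [div_eq_mul_inv]
      exact mul_le_of_le_one_left (inv_pos.mpr ht0).le
        (Real.exp_le_one_iff.mpr (by linarith))
  have h2 : (∫ t in u..M, t⁻¹) = Real.log M - Real.log u := by
    rw [integral_inv_of_pos hu0 (lt_of_lt_of_le one_pos hM1), Real.log_div
      (by linarith) hu0.ne']
  have h3 : E1r M ≤ 1 := (E1r_le_exp hM1).trans (Real.exp_le_one_iff.mpr (by linarith))
  have h4 : -Real.log u ≤ |Real.log u| := neg_le_abs _
  have : E1r u = (∫ t in u..M, Real.exp (-t) / t) + E1r M := hsplit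
  rw [this]
  have := h1.trans_eq h2
  linarith

lemma contOn_integrand {x : ℝ} (hx : 0 < x) :
    ContinuousOn (fun u => Real.exp u * E1r u) (Ioi (0:ℝ)) := by
  intro u hu
  exact (Real.continuous_exp.continuousAt.mul
    (hasDerivAt_E1r hu).continuousAt).continuousWithinAt

lemma int_exp_E1 {x : ℝ} (hx : 0 < x) :
    IntegrableOn (fun u => Real.exp u * expIntegralE1 u) (Ioc 0 x) := by
  have hbound : IntegrableOn
      (fun u => Real.exp x * (1 + Real.log (max 1 x)) + Real.exp x * |Real.log u|)
      (Ioc 0 x) := by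
    exact ((integrableOn_const_iff).mpr (Or.inr measure_Ioc_lt_top)).add
      ((int_abs_log hx).const_mul _)
  refine Integrable.mono' hbound ?_ ?_
  · refine (((contOn_integrand hx).mono Ioc_subset_Ioi_self).congr ?_).aestronglyMeasurable
      measurableSet_Ioc
    intro u hu
    dsimp only
    rw [E1_repr hu.1]
    rfl
  · filter_upwards [ae_restrict_mem measurableSet_Ioc] with u hu
    have hrepr : expIntegralE1 u = E1r u := E1_repr hu.1
    rw [hrepr]
    have h0 : (0:ℝ) ≤ E1r u := E1r_nonneg hu.1
    rw [Real.norm_eq_abs, abs_mul, abs_of_nonneg (Real.exp_pos _).le, abs_of_nonneg h0]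
    have hb := E1r_le_bound hx hu
    have he : Real.exp u ≤ Real.exp x := Real.exp_le_exp.mpr hu.2
    have h5 : (0:ℝ) ≤ 1 + Real.log (max 1 x) + |Real.log u| := by
      have : (0:ℝ) ≤ Real.log (max 1 x) := Real.log_nonneg (le_max_left _ _)
      positivity
    calc Real.exp u * E1r u ≤ Real.exp x * (1 + Real.log (max 1 x) + |Real.log u|) := by
          exact mul_le_mul he hb h0 (Real.exp_pos _).le
      _ = Real.exp x * (1 + Real.log (max 1 x)) + Real.exp x * |Real.log u| := by ring

/-- For `x > 0`, `∫₀^x e^{−(x−u)}E₁(u) du = e^{−x}(e^xE₁(x) + γ + log x)`, equivalently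
`∫₀^x e^uE₁(u) du = e^xE₁(x) + γ + log x`, where `γ` is the Euler–Mascheroni constant. -/
theorem convolution_exp_E1 (x : ℝ) (hx : 0 < x) :
    (∫ u in (0:ℝ)..x, Real.exp (-(x - u)) * expIntegralE1 u)
      = Real.exp (-x) * (Real.exp x * expIntegralE1 x +
          Real.eulerMascheroniConstant + Real.log x) ∧
    (∫ u in (0:ℝ)..x, Real.exp u * expIntegralE1 u)
      = Real.exp x * expIntegralE1 x + Real.eulerMascheroniConstant + Real.log x := by
  have key : (∫ u in (0:ℝ)..x, Real.exp u * expIntegralE1 u)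
      = Real.exp x * expIntegralE1 x + Real.eulerMascheroniConstant + Real.log x := by
    have hderiv : ∀ u ∈ Ioo (0:ℝ) x,
        HasDerivAt (fun y => Real.exp y * expIntegralE1 y + Real.log y)
          (Real.exp u * expIntegralE1 u) u := by
      intro u hu
      have h1 := ((Real.hasDerivAt_exp u).mul (hasDerivAt_expIntegralE1 hu.1)).add
        (Real.hasDerivAt_log hu.1.ne')
      have hz : Real.exp u * -(Real.exp (-u) / u) = -u⁻¹ := by
        rw [Real.exp_neg, mul_neg, neg_inj, div_eq_mul_inv, ← mul_assoc,
          mul_inv_cancel₀ (Real.exp_pos u).ne', one_mul]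
      have : Real.exp u * expIntegralE1 u + Real.exp u * -(Real.exp (-u) / u) + u⁻¹
          = Real.exp u * expIntegralE1 u := by linear_combination hz
      rwa [this] at h1
    have hint : IntervalIntegrable (fun u => Real.exp u * expIntegralE1 u) volume 0 x := by
      rw [intervalIntegrable_iff_integrableOn_Ioc_of_le hx.le]
      exact int_exp_E1 hx
    have ha : Tendsto (fun y => Real.exp y * expIntegralE1 y + Real.log y) (𝓝[>] (0:ℝ))
        (𝓝 (-Real.eulerMascheroniConstant)) := by
      refine tendsto_exp_mul_E1r_add_log.congr' ?_
      filter_upwards [self_mem_nhdsWithin] with y (hy : 0 < y)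
      rw [E1_repr hy]
      rfl
    have hb : Tendsto (fun y => Real.exp y * expIntegralE1 y + Real.log y) (𝓝[<] x)
        (𝓝 (Real.exp x * expIntegralE1 x + Real.log x)) := by
      have hc : ContinuousAt (fun y => Real.exp y * expIntegralE1 y + Real.log y) x :=
        (Real.continuous_exp.continuousAt.mul (hasDerivAt_expIntegralE1 hx).continuousAt).add
          (Real.continuousAt_log hx.ne')
      exact hc.continuousWithinAt
    have h := intervalIntegral.integral_eq_sub_of_hasDerivAt_of_tendsto hx hderiv hint ha hb
    rw [h]
    ring
  refine ⟨?_, key⟩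
  have h2 : (∫ u in (0:ℝ)..x, Real.exp (-(x - u)) * expIntegralE1 u)
      = ∫ u in (0:ℝ)..x, Real.exp (-x) * (Real.exp u * expIntegralE1 u) := by
    apply intervalIntegral.integral_congr
    intro u _
    dsimp only
    rw [show -(x - u) = -x + u by ring, Real.exp_add, mul_assoc]
  rw [h2, intervalIntegral.integral_const_mul, key]
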